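/- Let α > 0 be a non-integer real number, let m = ⌈α⌉, let a ∈ ℝ, and let β > α - 1. Then for every x > a, the m-th derivative at x of the function y ↦ (1/Γ(m-α)) ∫_a^y (y - τ)^(m-α-1) (τ - a)^β dτ equals (Γ(β+1)/Γ(β-α+1)) · (x - a)^(β-α). (This is the left-sided Riemann–Liouville fractional derivative of order α of τ ↦ (τ-a)^β.) -/

import Mathlib

open MeasureTheory Real

open scoped Topology

lemma real_beta_aux (u v : ℝ) (hu : 0 < u) (hv : 0 < v) :
    ∫ s in (0:ℝ)..1, s ^ (u - 1) * (1 - s) ^ (v - 1) =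
      Real.Gamma u * Real.Gamma v / Real.Gamma (u + v) := by
  have key := Complex.Gamma_mul_Gamma_eq_betaIntegral (s := (u:ℂ)) (t := (v:ℂ))
    (by simpa using hu) (by simpa using hv)
  have hB : Complex.betaIntegral (u:ℂ) (v:ℂ)
      = ((∫ s in (0:ℝ)..1, s ^ (u - 1) * (1 - s) ^ (v - 1) : ℝ) : ℂ) := by
    rw [Complex.betaIntegral, ← intervalIntegral.integral_ofReal]
    refine intervalIntegral.integral_congr fun s hs => ?_
    rw [Set.uIcc_of_le zero_le_one] at hs
    have h1 : ((u:ℂ) - 1) = ((u - 1 : ℝ) : ℂ) := by push_cast; ring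
    have h2 : ((v:ℂ) - 1) = ((v - 1 : ℝ) : ℂ) := by push_cast; ring
    have h3 : (1 : ℂ) - (s:ℂ) = ((1 - s : ℝ) : ℂ) := by push_cast; ring
    rw [h1, h2, h3, ← Complex.ofReal_cpow hs.1,
      ← Complex.ofReal_cpow (by linarith [hs.2] : (0:ℝ) ≤ 1 - s), ← Complex.ofReal_mul]
  rw [hB, Complex.Gamma_ofReal, Complex.Gamma_ofReal, ← Complex.ofReal_add,
    Complex.Gamma_ofReal] at key
  have hne : Real.Gamma (u + v) ≠ 0 := (Real.Gamma_pos_of_pos (by positivity)).ne'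
  have key2 : Real.Gamma u * Real.Gamma v
      = Real.Gamma (u + v) * ∫ s in (0:ℝ)..1, s ^ (u - 1) * (1 - s) ^ (v - 1) := by
    exact_mod_cast key
  rw [key2, mul_div_cancel_left₀ _ hne]

lemma rl_scaling (a y : ℝ) (hy : a < y) (c β : ℝ) :
    (∫ τ in a..y, (y - τ) ^ c * (τ - a) ^ β)
      = (y - a) ^ (c + β + 1) * ∫ s in (0:ℝ)..1, (1 - s) ^ c * s ^ β := by
  have hd : (0:ℝ) < y - a := sub_pos.mpr hy
  have h1 := intervalIntegral.integral_comp_mul_add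
    (f := fun τ => (y - τ) ^ c * (τ - a) ^ β) (a := 0) (b := 1) hd.ne' a
  simp only [mul_zero, zero_add, mul_one, sub_add_cancel] at h1
  have h2 : (∫ τ in a..y, (y - τ) ^ c * (τ - a) ^ β)
      = (y - a) * ∫ s in (0:ℝ)..1,
          (y - ((y - a) * s + a)) ^ c * (((y - a) * s + a) - a) ^ β := by
    rw [h1, smul_eq_mul, ← mul_assoc, mul_inv_cancel₀ hd.ne', one_mul]
  have h3 : ∀ s ∈ Set.uIcc (0:ℝ) 1,
      (y - ((y - a) * s + a)) ^ c * (((y - a) * s + a) - a) ^ β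
        = ((y - a) ^ c * (y - a) ^ β) * ((1 - s) ^ c * s ^ β) := by
    intro s hs
    rw [Set.uIcc_of_le zero_le_one] at hs
    have e1 : y - ((y - a) * s + a) = (y - a) * (1 - s) := by ring
    have e2 : (y - a) * s + a - a = (y - a) * s := by ring
    rw [e1, e2, Real.mul_rpow hd.le (by linarith [hs.2]), Real.mul_rpow hd.le hs.1]
    ring
  have e4 : (y - a) * ((y - a) ^ c * (y - a) ^ β) = (y - a) ^ (c + β + 1) := by
    rw [Real.rpow_add hd, Real.rpow_add hd, Real.rpow_one]; ring
  rw [h2, intervalIntegral.integral_congr h3, intervalIntegral.integral_const_mul,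
    ← mul_assoc, e4]

lemma iter_rpow (a c p : ℝ) (n : ℕ) : ∀ x : ℝ, a < x →
    iteratedDeriv n (fun y => c * (y - a) ^ p) x
      = (c * ∏ i ∈ Finset.range n, (p - (i:ℝ))) * (x - a) ^ (p - n) := by
  induction n with
  | zero => intro x hx; simp
  | succ n ih =>
    intro x hx
    rw [iteratedDeriv_succ]
    have hev : iteratedDeriv n (fun y => c * (y - a) ^ p) =ᶠ[𝓝 x]
        fun y => (c * ∏ i ∈ Finset.range n, (p - (i:ℝ))) * (y - a) ^ (p - n) := by
      filter_upwards [Ioi_mem_nhds hx] with y hy using ih y hy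
    rw [hev.deriv_eq]
    have hxa : x - a ≠ 0 := (sub_pos.mpr hx).ne'
    have h1 : HasDerivAt (fun y : ℝ => y - a) 1 x := (hasDerivAt_id x).sub_const a
    have h2 : HasDerivAt (fun y : ℝ => (y - a) ^ (p - n))
        ((p - n) * (x - a) ^ (p - n - 1) * 1) x :=
      by have h := (Real.hasDerivAt_rpow_const (x := x - a) (p := p - n) (Or.inl hxa)).comp x h1; exact h
    have h4 := (h2.const_mul (c * ∏ i ∈ Finset.range n, (p - (i:ℝ)))).deriv
    rw [h4, Finset.prod_range_succ]
    have h5 : p - ((n:ℝ) + 1) = p - n - 1 := by ring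
    have h6 : p - ((n + 1 : ℕ):ℝ) = p - n - 1 := by push_cast; ring
    rw [h6]
    ring

lemma gamma_add_nat {q : ℝ} (hq : 0 < q) (n : ℕ) :
    Real.Gamma (q + n) = (∏ j ∈ Finset.range n, (q + j)) * Real.Gamma q := by
  induction n with
  | zero => simp
  | succ n ih =>
    have h : q + ((n + 1 : ℕ):ℝ) = (q + n) + 1 := by push_cast; ring
    rw [h, Real.Gamma_add_one (by positivity : (0:ℝ) < q + n).ne', ih,
      Finset.prod_range_succ]
    ring

theorem rl_derivative_power (α : ℝ) (hα : 0 < α) (hαni : ∀ n : ℤ, α ≠ n)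
    (m : ℕ) (hm : m = ⌈α⌉₊) (a β : ℝ) (hβ : α - 1 < β) (x : ℝ) (hx : a < x) :
    iteratedDeriv m
      (fun y => (1 / Real.Gamma ((m : ℝ) - α)) *
        ∫ τ in a..y, (y - τ) ^ ((m : ℝ) - α - 1) * (τ - a) ^ β) x =
      (Real.Gamma (β + 1) / Real.Gamma (β - α + 1)) * (x - a) ^ (β - α) := by
  have hne' : α ≠ (m:ℝ) := by simpa using hαni (m:ℤ)
  have hum : α < (m:ℝ) :=
    lt_of_le_of_ne (by rw [hm]; exact Nat.le_ceil α) hne'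
  set u : ℝ := (m:ℝ) - α with hu_def
  have hu : 0 < u := sub_pos.mpr hum
  have hv : 0 < β + 1 := by linarith
  have hm1 : 1 ≤ m := by rw [hm]; exact Nat.ceil_pos.mpr hα
  have hq : 0 < β - α + 1 := by linarith
  set q : ℝ := β - α + 1 with hq_def
  have hGu : Real.Gamma u ≠ 0 := (Real.Gamma_pos_of_pos hu).ne'
  have hGq : Real.Gamma q ≠ 0 := (Real.Gamma_pos_of_pos hq).ne'
  have hGqm : Real.Gamma (q + m) ≠ 0 := (Real.Gamma_pos_of_pos (by positivity)).ne'
  have hI : (∫ s in (0:ℝ)..1, (1 - s) ^ (u - 1) * s ^ β)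
      = Real.Gamma (β + 1) * Real.Gamma u / Real.Gamma (β + 1 + u) := by
    rw [← real_beta_aux (β + 1) u hv hu]
    refine intervalIntegral.integral_congr fun s _ => ?_
    rw [add_sub_cancel_right, mul_comm]
  set C : ℝ := (1 / Real.Gamma u) * (Real.Gamma (β + 1) * Real.Gamma u / Real.Gamma (β + 1 + u))
    with hC_def
  have hF : (fun y => (1 / Real.Gamma u) *
        ∫ τ in a..y, (y - τ) ^ (u - 1) * (τ - a) ^ β) =ᶠ[𝓝 x]
      fun y => C * (y - a) ^ (u + β) := by
    filter_upwards [Ioi_mem_nhds hx] with y hy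
    rw [rl_scaling a y hy (u - 1) β, hI]
    have : u - 1 + β + 1 = u + β := by ring
    rw [this]
    ring
  rw [hF.iteratedDeriv_eq m, iter_rpow a C (u + β) m x hx]
  have he : u + β - (m:ℝ) = β - α := by rw [hu_def]; ring
  rw [he]
  have hre : (∏ i ∈ Finset.range m, (u + β - (i:ℝ))) = ∏ j ∈ Finset.range m, (q + j) := by
    rw [← Finset.prod_range_reflect (fun j => q + (j:ℝ)) m]
    refine Finset.prod_congr rfl fun i hi => ?_
    have hi' : i < m := Finset.mem_range.mp hi
    have h1 : i ≤ m - 1 := by omega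
    have hcast : ((m - 1 - i : ℕ) : ℝ) = (m:ℝ) - 1 - i := by
      rw [Nat.cast_sub h1, Nat.cast_sub hm1, Nat.cast_one]
    rw [hcast, hu_def, hq_def]
    ring
  have hgam : (∏ j ∈ Finset.range m, (q + (j:ℝ))) * Real.Gamma q = Real.Gamma (q + m) :=
    (gamma_add_nat hq m).symm
  have hqm : β + 1 + u = q + m := by rw [hu_def, hq_def]; ring
  rw [hre, hC_def, hqm]
  have hP : (0:ℝ) < ∏ j ∈ Finset.range m, (q + (j:ℝ)) :=
    Finset.prod_pos fun j _ => by positivity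
  have : (1 / Real.Gamma u * (Real.Gamma (β + 1) * Real.Gamma u / Real.Gamma (q + m)) *
      ∏ j ∈ Finset.range m, (q + (j:ℝ))) = Real.Gamma (β + 1) / Real.Gamma q := by
    rw [← hgam]
    field_simp
  rw [this]
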